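/- Let τ ↦ (x1(τ), x2(τ), z5(τ), z6(τ)) be a differentiable solution of the averaged ESC closed-loop system. If at some time τ₀ one has z5(τ₀)² + z6(τ₀)² = 1, (x1(τ₀), x2(τ₀)) ≠ (0, 0), and C1 c1 x1(τ₀) z5(τ₀) + C2 c2 x2(τ₀) z6(τ₀) = 0, then the derivative at τ₀ of the function M(τ) = C1 c1 x1(τ) z5(τ) + C2 c2 x2(τ) z6(τ) is strictly positive; in particular it is nonzero. -/

import Mathlib

open Real Filter

/-- The averaged ESC closed-loop system with positive constants `a, k1, k2, ω0, C1, C2, c1, c2`: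
`x1' = −(a k1/ω0) z5 (C1 c1 x1 z5 + C2 c2 x2 z6)`,
`x2' = −(a k1/ω0) z6 (C1 c1 x1 z5 + C2 c2 x2 z6)`,
`z5' = (a k2/ω0) z6 (C1 c1 x1 z6 − C2 c2 x2 z5)`,
`z6' = −(a k2/ω0) z5 (C1 c1 x1 z6 − C2 c2 x2 z5)`, holding for all `τ ∈ s`. -/
def AvgESC (a k1 k2 ω0 C1 C2 c1 c2 : ℝ) (x1 x2 z5 z6 : ℝ → ℝ) (s : Set ℝ) : Prop :=
  ∀ τ ∈ s,
    HasDerivAt x1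
      (-(a * k1 / ω0) * z5 τ * (C1 * c1 * x1 τ * z5 τ + C2 * c2 * x2 τ * z6 τ)) τ ∧
    HasDerivAt x2
      (-(a * k1 / ω0) * z6 τ * (C1 * c1 * x1 τ * z5 τ + C2 * c2 * x2 τ * z6 τ)) τ ∧
    HasDerivAt z5
      ((a * k2 / ω0) * z6 τ * (C1 * c1 * x1 τ * z6 τ - C2 * c2 * x2 τ * z5 τ)) τ ∧
    HasDerivAt z6
      (-(a * k2 / ω0) * z5 τ * (C1 * c1 * x1 τ * z6 τ - C2 * c2 * x2 τ * z5 τ)) τ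

/-- If at some time `τ₀` a solution of the averaged ESC closed-loop system
satisfies `z5² + z6² = 1`, `(x1, x2) ≠ (0, 0)` and `C1 c1 x1 z5 + C2 c2 x2 z6 = 0`, then the
derivative at `τ₀` of `M(τ) = C1 c1 x1 z5 + C2 c2 x2 z6` is strictly positive; in
particular it is nonzero. -/
theorem stmt18 (a k1 k2 ω0 C1 C2 c1 c2 : ℝ)
    (ha : 0 < a) (hk1 : 0 < k1) (hk2 : 0 < k2) (hω0 : 0 < ω0)
    (hC1 : 0 < C1) (hC2 : 0 < C2) (hc1 : 0 < c1) (hc2 : 0 < c2)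
    (x1 x2 z5 z6 : ℝ → ℝ)
    (hsol : AvgESC a k1 k2 ω0 C1 C2 c1 c2 x1 x2 z5 z6 Set.univ)
    (τ0 : ℝ)
    (hcircle : z5 τ0 ^ 2 + z6 τ0 ^ 2 = 1)
    (hx : (x1 τ0, x2 τ0) ≠ ((0 : ℝ), (0 : ℝ)))
    (hM0 : C1 * c1 * x1 τ0 * z5 τ0 + C2 * c2 * x2 τ0 * z6 τ0 = 0) :
    0 < deriv (fun σ => C1 * c1 * x1 σ * z5 σ + C2 * c2 * x2 σ * z6 σ) τ0 ∧
      deriv (fun σ => C1 * c1 * x1 σ * z5 σ + C2 * c2 * x2 σ * z6 σ) τ0 ≠ 0 := by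

  obtain ⟨h1, h2, h3, h4⟩ := hsol τ0 (Set.mem_univ τ0)
  have hN : C1 * c1 * x1 τ0 * z6 τ0 - C2 * c2 * x2 τ0 * z5 τ0 ≠ 0 := by
    intro hN
    apply hx
    have hx1 : x1 τ0 = 0 := by
      have h : C1 * c1 * x1 τ0 * (z5 τ0 ^ 2 + z6 τ0 ^ 2) = 0 := by
        linear_combination z5 τ0 * hM0 + z6 τ0 * hN
      rw [hcircle, mul_one] at h
      exact (mul_eq_zero.mp h).resolve_left (mul_pos hC1 hc1).ne' 
    have hx2 : x2 τ0 = 0 := by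
      have h : C2 * c2 * x2 τ0 * (z5 τ0 ^ 2 + z6 τ0 ^ 2) = 0 := by
        linear_combination z6 τ0 * hM0 - z5 τ0 * hN
      rw [hcircle, mul_one] at h
      exact (mul_eq_zero.mp h).resolve_left (mul_pos hC2 hc2).ne' 
    simp [hx1, hx2]
  have hM : HasDerivAt (fun σ => C1 * c1 * x1 σ * z5 σ + C2 * c2 * x2 σ * z6 σ)
      (C1 * c1 * ((-(a * k1 / ω0) * z5 τ0 * (C1 * c1 * x1 τ0 * z5 τ0 + C2 * c2 * x2 τ0 * z6 τ0)) * z5 τ0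
        + x1 τ0 * ((a * k2 / ω0) * z6 τ0 * (C1 * c1 * x1 τ0 * z6 τ0 - C2 * c2 * x2 τ0 * z5 τ0)))
      + C2 * c2 * ((-(a * k1 / ω0) * z6 τ0 * (C1 * c1 * x1 τ0 * z5 τ0 + C2 * c2 * x2 τ0 * z6 τ0)) * z6 τ0
        + x2 τ0 * (-(a * k2 / ω0) * z5 τ0 * (C1 * c1 * x1 τ0 * z6 τ0 - C2 * c2 * x2 τ0 * z5 τ0)))) τ0 := by
    simpa [mul_assoc, Pi.add_def] using (((h1.mul h3).const_mul (C1 * c1)).add ((h2.mul h4).const_mul (C2 * c2)))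
  have hd := hM.deriv
  rw [hd]
  have hK : 0 < a * k2 / ω0 := by positivity
  have hval : C1 * c1 * ((-(a * k1 / ω0) * z5 τ0 * (C1 * c1 * x1 τ0 * z5 τ0 + C2 * c2 * x2 τ0 * z6 τ0)) * z5 τ0
        + x1 τ0 * ((a * k2 / ω0) * z6 τ0 * (C1 * c1 * x1 τ0 * z6 τ0 - C2 * c2 * x2 τ0 * z5 τ0)))
      + C2 * c2 * ((-(a * k1 / ω0) * z6 τ0 * (C1 * c1 * x1 τ0 * z5 τ0 + C2 * c2 * x2 τ0 * z6 τ0)) * z6 τ0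
        + x2 τ0 * (-(a * k2 / ω0) * z5 τ0 * (C1 * c1 * x1 τ0 * z6 τ0 - C2 * c2 * x2 τ0 * z5 τ0)))
      = (a * k2 / ω0) * (C1 * c1 * x1 τ0 * z6 τ0 - C2 * c2 * x2 τ0 * z5 τ0) ^ 2 := by
    rw [hM0]; ring
  rw [hval]
  have hpos : 0 < (a * k2 / ω0) * (C1 * c1 * x1 τ0 * z6 τ0 - C2 * c2 * x2 τ0 * z5 τ0) ^ 2 :=
    mul_pos hK (by positivity)
  exact ⟨hpos, ne_of_gt hpos⟩
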